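/- Let σ : ℂ → ℂ be analytic at 0 with σ(0) = 0 and deriv σ 0 = 1. If there exists an integer m ≥ 1 such that the m-fold iterate σ^[m] agrees with the identity function on a neighborhood of 0 (i.e. σ^[m] =ᶠ[𝓝 0] id), then σ itself agrees with the identity function on a neighborhood of 0 (σ =ᶠ[𝓝 0] id). -/

import Mathlib

open Filter

/-- If `σ : ℂ → ℂ` is analytic at `0` with `σ 0 = 0` and `deriv σ 0 = 1`, and some
`m`-fold iterate of `σ` (with `m ≥ 1`) agrees with the identity near `0`, then `σ`
agrees with the identity near `0`. -/
theorem iterate_eventually_id_of_analytic (σ : ℂ → ℂ)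
    (hσ : AnalyticAt ℂ σ 0) (h0 : σ 0 = 0) (h1 : deriv σ 0 = 1)
    (h : ∃ m : ℕ, 1 ≤ m ∧ σ^[m] =ᶠ[nhds (0 : ℂ)] id) :
    σ =ᶠ[nhds (0 : ℂ)] id := by
  obtain ⟨m, hm, hiter⟩ := h
  set f : ℂ → ℂ := fun z => σ z - z with hf_def
  have hf : AnalyticAt ℂ f 0 := hσ.sub analyticAt_id
  by_contra hne
  have hfne : ¬ (f =ᶠ[nhds (0:ℂ)] 0) := by
    intro hc
    apply hne
    filter_upwards [hc] with z hz
    simpa [f, sub_eq_zero] using hz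
  have hord : analyticOrderAt f 0 ≠ ⊤ := fun hc => hfne (analyticOrderAt_eq_top.mp hc)
  obtain ⟨n, hn⟩ := ENat.ne_top_iff_exists.mp hord
  obtain ⟨g, hg, hg0, hfac⟩ := hf.analyticOrderAt_eq_natCast.mp hn.symm
  replace hfac : ∀ᶠ z in nhds (0:ℂ), f z = z ^ n * g z := by
    filter_upwards [hfac] with z hz
    simpa [smul_eq_mul] using hz
  -- f 0 = 0
  have hf0 : f 0 = 0 := by simp [f, h0]
  -- n ≥ 1
  have hn1 : 1 ≤ n := by
    by_contra hc
    push_neg at hc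
    interval_cases n
    have := hfac.self_of_nhds
    simp [hf0] at this
    exact hg0 this.symm
  -- deriv f 0 = 0
  have hdf : deriv f 0 = 0 := by
    have : deriv f 0 = deriv σ 0 - deriv (fun z : ℂ => z) 0 := by
      apply deriv_sub hσ.differentiableAt differentiable_id.differentiableAt
    simp [this, h1]
  -- n ≥ 2
  have hn2 : 2 ≤ n := by
    by_contra hc
    push_neg at hc
    interval_cases n
    · have hfeq : f =ᶠ[nhds (0:ℂ)] fun z => z ^ 1 * g z := hfac
      have hder : deriv f 0 = deriv (fun z : ℂ => z ^ 1 * g z) 0 :=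
        hfeq.deriv_eq
      have hd : deriv (fun z : ℂ => z ^ 1 * g z) 0 = g 0 := by
        have h1d : HasDerivAt (fun z : ℂ => z ^ 1 * g z)
            (1 * g 0 + 0 ^ 1 * deriv g 0) 0 := by
          exact ((hasDerivAt_pow 1 (0:ℂ)).mul hg.differentiableAt.hasDerivAt).congr_deriv
            (by simp)
        simpa using h1d.deriv
      rw [hdf] at hder
      exact hg0 (by rw [← hd, ← hder])
  -- iterates tend to 0
  have hσc : Filter.Tendsto σ (nhds (0:ℂ)) (nhds (0:ℂ)) := by
    have := hσ.continuousAt.tendsto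
    rwa [h0] at this
  have hit0 : ∀ j : ℕ, Filter.Tendsto (σ^[j]) (nhds (0:ℂ)) (nhds (0:ℂ)) := by
    intro j
    induction j with
    | zero => simp only [Function.iterate_zero]; exact Filter.tendsto_id
    | succ j ih =>
        rw [Function.iterate_succ']
        exact hσc.comp ih
  -- key induction
  have key : ∀ j : ℕ, Filter.Tendsto (fun z => (σ^[j] z - z) / z ^ n)
      (nhdsWithin (0:ℂ) {0}ᶜ) (nhds ((j : ℂ) * g 0)) := by
    intro j
    induction j with
    | zero => simp only [Nat.cast_zero, zero_mul, Function.iterate_zero, id_eq, sub_self, zero_div]; exact (tendsto_const_nhds : Filter.Tendsto (fun _ : ℂ => (0:ℂ)) _ (nhds 0))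
    | succ j ih =>
        -- σ^[j] z / z → 1
        have hzsmall : Filter.Tendsto (fun z : ℂ => z ^ (n - 1))
            (nhdsWithin (0:ℂ) {0}ᶜ) (nhds 0) := by
          have : Filter.Tendsto (fun z : ℂ => z ^ (n - 1)) (nhds 0) (nhds (0 ^ (n-1))) :=
            (continuous_pow (n-1)).tendsto 0
          rw [zero_pow (by omega)] at this
          exact this.mono_left nhdsWithin_le_nhds
        have hratio : Filter.Tendsto (fun z => σ^[j] z / z)
            (nhdsWithin (0:ℂ) {0}ᶜ) (nhds 1) := by
          have h1t : Filter.Tendsto (fun z => 1 + ((σ^[j] z - z) / z ^ n) * z ^ (n-1))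
              (nhdsWithin (0:ℂ) {0}ᶜ) (nhds (1 + ((j:ℂ) * g 0) * 0)) :=
            tendsto_const_nhds.add (ih.mul hzsmall)
          rw [mul_zero, add_zero] at h1t
          apply h1t.congr'
          filter_upwards [self_mem_nhdsWithin] with z hz
          have hz0 : z ≠ 0 := hz
          have hzn : z ^ n = z ^ (n - 1) * z := by
            rw [← pow_succ]
            congr 1
            omega
          field_simp [hzn]
          rw [hzn]
          ring
        have hgcont : Filter.Tendsto (fun z => g (σ^[j] z))
            (nhdsWithin (0:ℂ) {0}ᶜ) (nhds (g 0)) :=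
          (hg.continuousAt.tendsto.comp (hit0 j)).mono_left nhdsWithin_le_nhds
        have hT : Filter.Tendsto (fun z => f (σ^[j] z) / z ^ n)
            (nhdsWithin (0:ℂ) {0}ᶜ) (nhds (g 0)) := by
          have ht : Filter.Tendsto (fun z => (σ^[j] z / z) ^ n * g (σ^[j] z))
              (nhdsWithin (0:ℂ) {0}ᶜ) (nhds (1 ^ n * g 0)) :=
            (hratio.pow n).mul hgcont
          rw [one_pow, one_mul] at ht
          apply ht.congr'
          have hmem : ∀ᶠ z in nhdsWithin (0:ℂ) {0}ᶜ,
              f (σ^[j] z) = (σ^[j] z) ^ n * g (σ^[j] z) := by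
            have := (hit0 j).eventually hfac
            exact this.filter_mono nhdsWithin_le_nhds
          filter_upwards [self_mem_nhdsWithin, hmem] with z hz hfz
          have hz0 : z ≠ 0 := hz
          rw [hfz, div_pow]
          ring
        have hsum : Filter.Tendsto
            (fun z => f (σ^[j] z) / z ^ n + (σ^[j] z - z) / z ^ n)
            (nhdsWithin (0:ℂ) {0}ᶜ) (nhds (g 0 + (j:ℂ) * g 0)) := hT.add ih
        have : (g 0 + (j:ℂ) * g 0) = ((j+1 : ℕ) : ℂ) * g 0 := by push_cast; ring
        rw [this] at hsum
        apply hsum.congr'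
        filter_upwards [self_mem_nhdsWithin] with z hz
        rw [Function.iterate_succ']
        show f (σ^[j] z) / z ^ n + (σ^[j] z - z) / z ^ n = ((σ ∘ σ^[j]) z - z) / z ^ n
        rw [← add_div]
        congr 1
        simp only [f, Function.comp_apply]
        ring
  -- contradiction
  have hzero : Filter.Tendsto (fun z => (σ^[m] z - z) / z ^ n)
      (nhdsWithin (0:ℂ) {0}ᶜ) (nhds 0) := by
    have hE : ∀ᶠ z in nhdsWithin (0:ℂ) {0}ᶜ, (σ^[m] z - z) / z ^ n = 0 := by
      have := hiter.filter_mono (nhdsWithin_le_nhds : nhdsWithin (0:ℂ) {0}ᶜ ≤ nhds 0)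
      filter_upwards [this] with z hz
      simp [hz]
    have hE' : (fun _ : ℂ => (0:ℂ)) =ᶠ[nhdsWithin (0:ℂ) {0}ᶜ]
        fun z => (σ^[m] z - z) / z ^ n := hE.mono fun z hz => hz.symm
    exact tendsto_const_nhds.congr' hE'
  have huniq : (m : ℂ) * g 0 = 0 :=
    tendsto_nhds_unique (key m) hzero
  have hm0 : (m : ℂ) ≠ 0 := Nat.cast_ne_zero.mpr (by omega)
  rcases mul_eq_zero.mp huniq with hc | hc
  · exact absurd hc hm0
  · exact hg0 hc
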